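/- In ℚ[[X]], let F be the power series with coefficient of Xⁿ equal to the n-th Catalan number c_n for n ≥ 1 and constant coefficient 0 (the generating series of the dendriform operad), and let G = Σ_{n≥1} n·Xⁿ = X/(1−X)² (the generating series of the diassociative operad). Then the Koszul duality functional equation holds: G(−F(−X)) = X, where composition is substitution of formal power series with zero constant term. -/

import Mathlib

open PowerSeries

/-- Composition (substitution) of formal power series over ℚ: `psComp f g = f(g)`.
For `g` with zero constant term this agrees with the usual substitution, since the
coefficient of `Xⁿ` in `f(g)` only involves `gᵏ` for `k ≤ n`. -/
noncomputable def psComp (f g : PowerSeries ℚ) : PowerSeries ℚ :=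
  PowerSeries.mk fun n =>
    PowerSeries.coeff (R := ℚ) n (∑ k ∈ Finset.range (n + 1), PowerSeries.coeff (R := ℚ) k f • g ^ k)

/-- The generating series of the dendriform operad: coefficient of Xⁿ is the
n-th Catalan number for n ≥ 1, constant coefficient 0. -/
noncomputable def dendSeries : PowerSeries ℚ :=
  PowerSeries.mk fun n => if n = 0 then 0 else (catalan n : ℚ)

/-- The generating series of the diassociative operad: `Σ_{n≥1} n·Xⁿ = X/(1−X)²`. -/
noncomputable def diasSeries : PowerSeries ℚ :=
  PowerSeries.mk fun n => (n : ℚ)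

noncomputable def catSeries : PowerSeries ℚ := PowerSeries.mk fun n => (catalan n : ℚ)

lemma catSeries_eq : catSeries = 1 + X * catSeries ^ 2 := by
  ext n
  cases n with
  | zero => simp [catSeries]
  | succ m =>
    rw [map_add, coeff_succ_X_mul]
    simp [catSeries, sq, coeff_mul, catalan_succ']

lemma dend_eq : dendSeries = catSeries - 1 := by
  ext n
  cases n with
  | zero => simp [dendSeries, catSeries]
  | succ m => simp [dendSeries, catSeries]

lemma psComp_negX (f : PowerSeries ℚ) : psComp f (-X) = rescale (-1) f := by
  ext n
  simp only [psComp, coeff_mk, ← rescale_neg_one_X, ← map_pow, map_sum, map_smul,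
    coeff_rescale, coeff_X_pow, smul_eq_mul, mul_ite, mul_zero, mul_one]
  rw [Finset.sum_eq_single n]
  · simp [mul_comm]
  · intro b _ hb; simp [Ne.symm hb]
  · intro h; exact absurd (Finset.self_mem_range_succ n) h

-- H := -(psComp dendSeries (-X))
lemma H_eq : -(psComp dendSeries (-X)) =
    X * (1 - -(psComp dendSeries (-X))) ^ 2 := by
  rw [psComp_negX, dend_eq]
  have h1 : rescale (-1 : ℚ) (catSeries - 1) = rescale (-1) catSeries - 1 := by
    rw [map_sub, map_one]
  rw [h1]
  have h2 : rescale (-1 : ℚ) catSeries = 1 - X * (rescale (-1) catSeries) ^ 2 := by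
    conv_lhs => rw [catSeries_eq]
    rw [map_add, map_one, map_mul, map_pow, rescale_neg_one_X]
    ring
  set D := rescale (-1 : ℚ) catSeries
  have : 1 - -(D - 1) = D := by ring
  rw [this]
  conv_lhs => rw [h2]
  ring

lemma coeff_pow_eq_zero {g : ℚ⟦X⟧} (hg : constantCoeff g = 0) {m k : ℕ}
    (h : m < k) : coeff m (g ^ k) = 0 := by
  have hdvd : (X : ℚ⟦X⟧) ^ k ∣ g ^ k :=
    pow_dvd_pow_of_dvd (X_dvd_iff.mpr hg) k
  exact (X_pow_dvd_iff.mp hdvd) m h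

lemma sum_mul_identity (n : ℕ) (x : ℚ⟦X⟧) :
    (∑ k ∈ Finset.range (n + 1), (k : ℚ) • x ^ k) * (1 - x) ^ 2 =
      x - ((n + 1 : ℕ) : ℚ) • x ^ (n + 1) + (n : ℚ) • x ^ (n + 2) := by
  induction n with
  | zero => simp
  | succ m ih =>
    rw [Finset.sum_range_succ, add_mul, ih]
    simp only [Nat.cast_smul_eq_nsmul, nsmul_eq_mul]
    push_cast
    ring

lemma coeff_dias (k : ℕ) : coeff k diasSeries = (k : ℚ) := by
  rw [diasSeries, coeff_mk]

/-- Koszul duality functional equation for the pair Dend/Dias: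
`G(−F(−X)) = X`. -/
theorem dend_dias_koszul_duality :
    psComp diasSeries (-(psComp dendSeries (-PowerSeries.X))) = PowerSeries.X := by
  set H := -(psComp dendSeries (-X)) with hHdef
  have hH : H = X * (1 - H) ^ 2 := H_eq
  have hH0 : constantCoeff H = 0 := by
    rw [hH, map_mul, constantCoeff_X, zero_mul]
  have key : psComp diasSeries H * (1 - H) ^ 2 = X * (1 - H) ^ 2 := by
    ext n
    have step1 : coeff n (psComp diasSeries H * (1 - H) ^ 2)
        = coeff n ((∑ k ∈ Finset.range (n + 1), (k : ℚ) • H ^ k) * (1 - H) ^ 2) := by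
      rw [coeff_mul, coeff_mul]
      refine Finset.sum_congr rfl fun p hp => ?_
      congr 1
      have hp1 : p.1 ≤ n := by
        have := Finset.HasAntidiagonal.mem_antidiagonal.mp hp; omega
      rw [psComp, coeff_mk]
      simp_rw [coeff_dias]
      rw [map_sum, map_sum]
      refine Finset.sum_subset ?_ ?_
      · intro k hk
        simp only [Finset.mem_range] at *
        omega
      · intro k _ hk2
        simp only [Finset.mem_range, not_lt] at hk2
        rw [map_smul, coeff_pow_eq_zero hH0 (by omega), smul_zero]
    rw [step1, sum_mul_identity]
    conv_rhs => rw [← hH]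
    rw [map_add, map_sub, map_smul, map_smul,
      coeff_pow_eq_zero hH0 (by omega), coeff_pow_eq_zero hH0 (by omega),
      smul_zero, smul_zero, sub_zero, add_zero]
  have hne : ((1 : ℚ⟦X⟧) - H) ^ 2 ≠ 0 := by
    intro h
    have h1 : constantCoeff (((1 : ℚ⟦X⟧) - H) ^ 2) = 1 := by
      rw [map_pow, map_sub, map_one, hH0, sub_zero, one_pow]
    rw [h, map_zero] at h1
    exact one_ne_zero h1.symm
  exact mul_right_cancel₀ hne key
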